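/- Consider the planar ODE ẋ = −2xy, ẏ = 2x² (the Poisson formulation of the two-dimensional Toda lattice with bracket {x,y} = −x and Hamiltonian H = x² + y²). For every b > 0, the equilibrium (0, b) is Lyapunov stable: for every ε > 0 there exists δ > 0 such that every differentiable curve γ : [0,∞) → ℝ² satisfying γ'(t) = (−2γ₁(t)γ₂(t), 2γ₁(t)²) for all t ≥ 0 and ‖γ(0) − (0,b)‖ < δ satisfies ‖γ(t) − (0,b)‖ < ε for all t ≥ 0. -/

import Mathlib

open Set

/-- Lyapunov stability of the equilibrium `(0, b)`, `b > 0`, of the planar ODE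
`ẋ = −2xy, ẏ = 2x²` (Poisson formulation of the two-dimensional Toda lattice). -/
theorem stmt_7 (b : ℝ) (hb : 0 < b) :
    ∀ ε > 0, ∃ δ > 0, ∀ γ : ℝ → ℝ × ℝ,
      (∀ t ∈ Set.Ici (0 : ℝ), HasDerivWithinAt γ
        (-2 * (γ t).1 * (γ t).2, 2 * (γ t).1 ^ 2) (Set.Ici 0) t) →
      ‖γ 0 - ((0 : ℝ), b)‖ < δ → ∀ t ≥ (0 : ℝ), ‖γ t - ((0 : ℝ), b)‖ < ε := by
  intro ε hε
  set ε' : ℝ := min ε b with hε'def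
  have hε'pos : 0 < ε' := lt_min hε hb
  have hε'le : ε' ≤ ε := min_le_left _ _
  have hε'leb : ε' ≤ b := min_le_right _ _
  refine ⟨ε' / 4, by positivity, ?_⟩
  intro γ hγ h0 T hT
  set x : ℝ → ℝ := fun t => (γ t).1 with hxdef
  set y : ℝ → ℝ := fun t => (γ t).2 with hydef
  -- derivatives of components
  have hx' : ∀ t ∈ Ici (0 : ℝ), HasDerivWithinAt x (-2 * x t * y t) (Ici 0) t := by
    intro t ht
    exact (ContinuousLinearMap.fst ℝ ℝ ℝ).hasFDerivAt.comp_hasDerivWithinAt t (hγ t ht)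
  have hy' : ∀ t ∈ Ici (0 : ℝ), HasDerivWithinAt y (2 * x t ^ 2) (Ici 0) t := by
    intro t ht
    exact (ContinuousLinearMap.snd ℝ ℝ ℝ).hasFDerivAt.comp_hasDerivWithinAt t (hγ t ht)
  have hcx : ContinuousOn x (Icc (0 : ℝ) T) :=
    fun t ht => ((hx' t ht.1).continuousWithinAt).mono (Icc_subset_Ici_self)
  have hcy : ContinuousOn y (Icc (0 : ℝ) T) :=
    fun t ht => ((hy' t ht.1).continuousWithinAt).mono (Icc_subset_Ici_self)
  -- norm unfolding
  have hnorm : ∀ t : ℝ, ‖γ t - ((0 : ℝ), b)‖ = max |x t| |y t - b| := by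
    intro t
    have : γ t - ((0 : ℝ), b) = (x t - 0, y t - b) := rfl
    rw [this, Prod.norm_def]
    simp [Real.norm_eq_abs]
  rw [hnorm] at h0
  have hx0 : |x 0| < ε' / 4 := lt_of_le_of_lt (le_max_left _ _) h0
  have hy0 : |y 0 - b| < ε' / 4 := lt_of_le_of_lt (le_max_right _ _) h0
  have hy0lt : y 0 < b + ε' / 4 := by have := abs_lt.1 hy0; linarith [this.2]
  have hy0gt : b - ε' / 4 < y 0 := by have := abs_lt.1 hy0; linarith [this.1]
  have hx0sq : x 0 ^ 2 < (ε' / 4) ^ 2 := by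
    have := abs_lt.1 hx0
    nlinarith [this.1, this.2]
  -- conservation of H = x² + y²
  have hcons : x T ^ 2 + y T ^ 2 = x 0 ^ 2 + y 0 ^ 2 := by
    have := constant_of_has_deriv_right_zero (f := fun t => x t ^ 2 + y t ^ 2)
      (a := 0) (b := T)
      (by exact (hcx.pow 2).add (hcy.pow 2))
      (by
        intro t ht
        have ht0 : t ∈ Ici (0 : ℝ) := ht.1
        have hx'' := ((hx' t ht0).pow 2).mono (Ici_subset_Ici.2 ht.1)
        have hy'' := ((hy' t ht0).pow 2).mono (Ici_subset_Ici.2 ht.1)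
        have := hx''.add hy''
        convert this using 1
        · rfl
        · push_cast; ring)
    simpa using this T (right_mem_Icc.2 hT)
  -- y is nondecreasing: y 0 ≤ y T
  have hmono : y 0 ≤ y T := by
    have := image_le_of_deriv_right_le_deriv_boundary (f := fun t => -(y t))
      (f' := fun t => -(2 * x t ^ 2)) (a := 0) (b := T)
      (hcy.neg)
      (by
        intro t ht
        exact ((hy' t ht.1).mono (Ici_subset_Ici.2 ht.1)).neg)
      (B := fun _ => -(y 0)) (B' := fun _ => 0)
      (le_refl _)
      continuousOn_const
      (fun t _ => hasDerivWithinAt_const _ _ _)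
      (by intro t _; simp; positivity)
    have hT' := this (right_mem_Icc.2 hT)
    simpa using hT'
  -- y 0 is positive
  have hy0pos : 0 < y 0 := by
    have : ε' / 4 ≤ b / 4 := by linarith
    linarith
  -- bounds at time T
  have hyTsq : y T ^ 2 ≤ x 0 ^ 2 + y 0 ^ 2 := by nlinarith [sq_nonneg (x T)]
  have hrsq : x 0 ^ 2 + y 0 ^ 2 < (b + ε') ^ 2 := by nlinarith
  have hyTub : y T - b < ε' := by nlinarith
  have hyTlb : -ε' < y T - b := by
    have : b - ε' / 4 < y T := lt_of_lt_of_le hy0gt hmono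
    linarith
  have hxTsq : x T ^ 2 ≤ x 0 ^ 2 := by
    have hyy : y 0 ^ 2 ≤ y T ^ 2 := by nlinarith
    nlinarith
  have hxT : |x T| < ε' := by
    have h1 : |x T| ^ 2 ≤ |x 0| ^ 2 := by
      simpa [sq_abs] using hxTsq
    have h2 : |x T| ≤ |x 0| := by
      rw [← Real.sqrt_sq (abs_nonneg (x T)), ← Real.sqrt_sq (abs_nonneg (x 0))]
      exact Real.sqrt_le_sqrt h1
    calc |x T| ≤ |x 0| := h2
      _ < ε' / 4 := hx0
      _ < ε' := by linarith
  rw [hnorm]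
  have hyT : |y T - b| < ε' := abs_lt.2 ⟨hyTlb, hyTub⟩
  exact lt_of_lt_of_le (max_lt hxT hyT) hε'le
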